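/- Let R₀^! = F₂⟨w, z, θ⟩/(w², z², wθ+θw, zθ+θz, θ²), equipped with the F₂-linear derivation μ₁ determined by μ₁(w) = μ₁(z) = 0 and μ₁(θ) = wz + zw, extended by the Leibniz rule. Then μ₁ is well-defined on the quotient, satisfies μ₁² = 0, and the homology algebra H(R₀^!, μ₁) is isomorphic to the exterior algebra F₂⟨w,z⟩/(w², z², wz + zw), which has dimension 4 over F₂ with basis {1, w, z, wz}. -/

import Mathlib

/-- Relations defining `R₀^! = F₂⟨w,z,θ⟩/(w², z², wθ+θw, zθ+θz, θ²)` (char 2, so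
`wθ+θw = 0` is `wθ = θw`). Letters: `0 = w`, `1 = z`, `2 = θ`. -/
inductive relK : FreeAlgebra (ZMod 2) (Fin 3) → FreeAlgebra (ZMod 2) (Fin 3) → Prop
  | wsq : relK (FreeAlgebra.ι (ZMod 2) 0 * FreeAlgebra.ι (ZMod 2) 0) 0
  | zsq : relK (FreeAlgebra.ι (ZMod 2) 1 * FreeAlgebra.ι (ZMod 2) 1) 0
  | wth : relK (FreeAlgebra.ι (ZMod 2) 0 * FreeAlgebra.ι (ZMod 2) 2)
      (FreeAlgebra.ι (ZMod 2) 2 * FreeAlgebra.ι (ZMod 2) 0)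
  | zth : relK (FreeAlgebra.ι (ZMod 2) 1 * FreeAlgebra.ι (ZMod 2) 2)
      (FreeAlgebra.ι (ZMod 2) 2 * FreeAlgebra.ι (ZMod 2) 1)
  | thsq : relK (FreeAlgebra.ι (ZMod 2) 2 * FreeAlgebra.ι (ZMod 2) 2) 0

/-- The algebra `R₀^!`. -/
abbrev R0dual := RingQuot relK

noncomputable def wK : R0dual := RingQuot.mkRingHom relK (FreeAlgebra.ι (ZMod 2) 0)
noncomputable def zK : R0dual := RingQuot.mkRingHom relK (FreeAlgebra.ι (ZMod 2) 1)
noncomputable def thK : R0dual := RingQuot.mkRingHom relK (FreeAlgebra.ι (ZMod 2) 2)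

/-- Relations defining the exterior algebra `E = F₂⟨w,z⟩/(w², z², wz+zw)`. -/
inductive relE : FreeAlgebra (ZMod 2) (Fin 2) → FreeAlgebra (ZMod 2) (Fin 2) → Prop
  | wsq : relE (FreeAlgebra.ι (ZMod 2) 0 * FreeAlgebra.ι (ZMod 2) 0) 0
  | zsq : relE (FreeAlgebra.ι (ZMod 2) 1 * FreeAlgebra.ι (ZMod 2) 1) 0
  | comm : relE (FreeAlgebra.ι (ZMod 2) 0 * FreeAlgebra.ι (ZMod 2) 1)
      (FreeAlgebra.ι (ZMod 2) 1 * FreeAlgebra.ι (ZMod 2) 0)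

/-- The exterior algebra on two generators over `F₂`. -/
abbrev extAlg := RingQuot relE

noncomputable def wE : extAlg := RingQuot.mkRingHom relE (FreeAlgebra.ι (ZMod 2) 0)
noncomputable def zE : extAlg := RingQuot.mkRingHom relE (FreeAlgebra.ι (ZMod 2) 1)

set_option synthInstance.maxHeartbeats 1000000
set_option maxHeartbeats 1000000
-- PART 1: basics
lemma addSelf {A : Type*} [AddCommMonoid A] [Module (ZMod 2) A] (x : A) : x + x = 0 := by
  have : (2 : ZMod 2) • x = 0 := by rw [show (2 : ZMod 2) = 0 from rfl, zero_smul]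
  rwa [two_smul] at this

lemma mkK (u : FreeAlgebra (ZMod 2) (Fin 3)) :
    RingQuot.mkAlgHom (ZMod 2) relK u = RingQuot.mkRingHom relK u := by
  rw [← RingQuot.mkAlgHom_coe (ZMod 2)]; rfl

lemma mkE (u : FreeAlgebra (ZMod 2) (Fin 2)) :
    RingQuot.mkAlgHom (ZMod 2) relE u = RingQuot.mkRingHom relE u := by
  rw [← RingQuot.mkAlgHom_coe (ZMod 2)]; rfl

lemma wK_sq : wK * wK = 0 := by
  have := RingQuot.mkRingHom_rel relK.wsq
  simpa [wK, map_mul] using this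

lemma zK_sq : zK * zK = 0 := by
  have := RingQuot.mkRingHom_rel relK.zsq
  simpa [zK, map_mul] using this

lemma thK_sq : thK * thK = 0 := by
  have := RingQuot.mkRingHom_rel relK.thsq
  simpa [thK, map_mul] using this

lemma wth_comm : wK * thK = thK * wK := by
  have := RingQuot.mkRingHom_rel relK.wth
  simpa [wK, thK, map_mul] using this

lemma zth_comm : zK * thK = thK * zK := by
  have := RingQuot.mkRingHom_rel relK.zth
  simpa [zK, thK, map_mul] using this

lemma wE_sq : wE * wE = 0 := by
  have := RingQuot.mkRingHom_rel relE.wsq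
  simpa [wE, map_mul] using this

lemma zE_sq : zE * zE = 0 := by
  have := RingQuot.mkRingHom_rel relE.zsq
  simpa [zE, map_mul] using this

lemma wzE_comm : wE * zE = zE * wE := by
  have := RingQuot.mkRingHom_rel relE.comm
  simpa [wE, zE, map_mul] using this

lemma R0dual_induction {P : R0dual → Prop}
    (halg : ∀ r : ZMod 2, P (algebraMap (ZMod 2) R0dual r))
    (hw : P wK) (hz : P zK) (hth : P thK)
    (hadd : ∀ x y, P x → P y → P (x + y))
    (hmul : ∀ x y, P x → P y → P (x * y)) : ∀ x, P x := by
  intro x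
  obtain ⟨u, rfl⟩ := RingQuot.mkAlgHom_surjective (ZMod 2) relK x
  induction u using FreeAlgebra.induction with
  | grade0 r => simpa [AlgHom.commutes] using halg r
  | grade1 i =>
      fin_cases i
      · simpa [mkK, wK] using hw
      · simpa [mkK, zK] using hz
      · simpa [mkK, thK] using hth
  | mul x y hx hy => rw [map_mul]; exact hmul _ _ hx hy
  | add x y hx hy => rw [map_add]; exact hadd _ _ hx hy

lemma extAlg_induction {P : extAlg → Prop}
    (halg : ∀ r : ZMod 2, P (algebraMap (ZMod 2) extAlg r))
    (hw : P wE) (hz : P zE)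
    (hadd : ∀ x y, P x → P y → P (x + y))
    (hmul : ∀ x y, P x → P y → P (x * y)) : ∀ x, P x := by
  intro x
  obtain ⟨u, rfl⟩ := RingQuot.mkAlgHom_surjective (ZMod 2) relE x
  induction u using FreeAlgebra.induction with
  | grade0 r => simpa [AlgHom.commutes] using halg r
  | grade1 i =>
      fin_cases i
      · simpa [mkE, wE] using hw
      · simpa [mkE, zE] using hz
  | mul x y hx hy => rw [map_mul]; exact hmul _ _ hx hy
  | add x y hx hy => rw [map_add]; exact hadd _ _ hx hy
-- PART 2: the derivation
noncomputable def omK : R0dual := wK * zK + zK * wK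

open TrivSqZeroExt

lemma th_om_comm : thK * omK = omK * thK := by
  have h1 : thK * (wK * zK) = (wK * zK) * thK := by
    rw [← mul_assoc, ← wth_comm, mul_assoc, ← zth_comm, ← mul_assoc]
  have h2 : thK * (zK * wK) = (zK * wK) * thK := by
    rw [← mul_assoc, ← zth_comm, mul_assoc, ← wth_comm, ← mul_assoc]
  rw [omK, mul_add, add_mul, h1, h2]

lemma w_om : wK * omK = omK * wK := by
  have h1 : wK * (wK * zK) = 0 := by rw [← mul_assoc, wK_sq, zero_mul]
  have h2 : zK * wK * wK = 0 := by rw [mul_assoc, wK_sq, mul_zero]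
  rw [omK, mul_add, add_mul, h1, h2, zero_add, add_zero, mul_assoc]

lemma z_om : zK * omK = omK * zK := by
  have h1 : zK * (zK * wK) = 0 := by rw [← mul_assoc, zK_sq, zero_mul]
  have h2 : wK * zK * zK = 0 := by rw [mul_assoc, zK_sq, mul_zero]
  rw [omK, mul_add, add_mul, h1, h2, add_zero, zero_add, ← mul_assoc]

noncomputable def deltaPre : FreeAlgebra (ZMod 2) (Fin 3) →ₐ[ZMod 2] DualNumber R0dual :=
  FreeAlgebra.lift (ZMod 2) ![inl wK, inl zK, inl thK + inr omK]

lemma deltaPre_rel : ∀ x y, relK x y → deltaPre x = deltaPre y := by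
  intro x y h
  induction h with
  | wsq =>
      simp only [deltaPre, map_mul, map_zero, FreeAlgebra.lift_ι_apply, Matrix.cons_val_zero]
      rw [inl_mul_inl, wK_sq, inl_zero]
  | zsq =>
      simp only [deltaPre, map_mul, map_zero, FreeAlgebra.lift_ι_apply, Matrix.cons_val_one,
        Matrix.head_cons, Matrix.cons_val_zero]
      rw [inl_mul_inl, zK_sq, inl_zero]
  | thsq =>
      simp only [deltaPre, map_mul, map_zero, FreeAlgebra.lift_ι_apply]
      have : (![inl wK, inl zK, inl thK + inr omK] : Fin 3 → DualNumber R0dual) 2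
          = inl thK + inr omK := rfl
      rw [this]
      refine TrivSqZeroExt.ext ?_ ?_
      · simp [fst_mul, thK_sq]
      · simp only [snd_mul, fst_add, snd_add, fst_inl, snd_inl, fst_inr, snd_inr, snd_zero,
          zero_add, add_zero, smul_eq_mul, op_smul_eq_mul, th_om_comm]
        exact addSelf _
  | wth =>
      simp only [deltaPre, map_mul, FreeAlgebra.lift_ι_apply]
      have h2 : (![inl wK, inl zK, inl thK + inr omK] : Fin 3 → DualNumber R0dual) 2
          = inl thK + inr omK := rfl
      have h0 : (![inl wK, inl zK, inl thK + inr omK] : Fin 3 → DualNumber R0dual) 0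
          = inl wK := rfl
      rw [h2, h0]
      refine TrivSqZeroExt.ext ?_ ?_
      · simp [fst_mul, wth_comm]
      · simp [snd_mul, smul_eq_mul, op_smul_eq_mul, w_om]
  | zth =>
      simp only [deltaPre, map_mul, FreeAlgebra.lift_ι_apply]
      have h2 : (![inl wK, inl zK, inl thK + inr omK] : Fin 3 → DualNumber R0dual) 2
          = inl thK + inr omK := rfl
      have h1 : (![inl wK, inl zK, inl thK + inr omK] : Fin 3 → DualNumber R0dual) 1
          = inl zK := rfl
      rw [h2, h1]
      refine TrivSqZeroExt.ext ?_ ?_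
      · simp [fst_mul, zth_comm]
      · simp [snd_mul, smul_eq_mul, op_smul_eq_mul, z_om]

noncomputable def delta : R0dual →ₐ[ZMod 2] DualNumber R0dual :=
  RingQuot.liftAlgHom (ZMod 2) ⟨deltaPre, deltaPre_rel⟩

lemma delta_mk (u : FreeAlgebra (ZMod 2) (Fin 3)) :
    delta (RingQuot.mkAlgHom (ZMod 2) relK u) = deltaPre u :=
  RingQuot.liftAlgHom_mkAlgHom_apply _ _ _ _

lemma delta_wK : delta wK = inl wK := by
  conv_lhs => rw [show wK = RingQuot.mkAlgHom (ZMod 2) relK (FreeAlgebra.ι (ZMod 2) 0) from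
    (mkK _).symm, delta_mk]
  simp [deltaPre]

lemma delta_zK : delta zK = inl zK := by
  conv_lhs => rw [show zK = RingQuot.mkAlgHom (ZMod 2) relK (FreeAlgebra.ι (ZMod 2) 1) from
    (mkK _).symm, delta_mk]
  simp [deltaPre]

lemma delta_thK : delta thK = inl thK + inr omK := by
  conv_lhs => rw [show thK = RingQuot.mkAlgHom (ZMod 2) relK (FreeAlgebra.ι (ZMod 2) 2) from
    (mkK _).symm, delta_mk]
  simp only [deltaPre, FreeAlgebra.lift_ι_apply]
  rfl

lemma delta_fst : ∀ x : R0dual, (delta x).fst = x := by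
  apply R0dual_induction
  · intro r; rw [AlgHom.commutes]; simp [algebraMap_eq_inl']
  · rw [delta_wK]; simp
  · rw [delta_zK]; simp
  · rw [delta_thK]; simp
  · intro x y hx hy; rw [map_add, fst_add, hx, hy]
  · intro x y hx hy; rw [map_mul, fst_mul, hx, hy]

noncomputable def mu1 : R0dual →ₗ[ZMod 2] R0dual where
  toFun x := (delta x).snd
  map_add' x y := show (delta (x + y)).snd = (delta x).snd + (delta y).snd by
    rw [map_add, snd_add]
  map_smul' r x := show (delta (r • x)).snd = r • (delta x).snd by
    rw [map_smul, snd_smul]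

lemma mu1_apply (x : R0dual) : mu1 x = (delta x).snd := rfl

lemma mu1_wK : mu1 wK = 0 := by rw [mu1_apply, delta_wK, snd_inl]
lemma mu1_zK : mu1 zK = 0 := by rw [mu1_apply, delta_zK, snd_inl]
lemma mu1_thK : mu1 thK = omK := by rw [mu1_apply, delta_thK, snd_add, snd_inl, snd_inr, zero_add]

lemma mu1_mul (a b : R0dual) : mu1 (a * b) = mu1 a * b + a * mu1 b := by
  rw [mu1_apply, map_mul, snd_mul, mu1_apply, mu1_apply, delta_fst, delta_fst]
  rw [smul_eq_mul, op_smul_eq_mul, add_comm]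

lemma mu1_one : mu1 (1 : R0dual) = 0 := by
  have h := mu1_mul 1 1
  simp only [mul_one, one_mul] at h
  exact add_eq_left.mp h.symm

lemma mu1_algebraMap (r : ZMod 2) : mu1 (algebraMap (ZMod 2) R0dual r) = 0 := by
  rw [Algebra.algebraMap_eq_smul_one, map_smul, mu1_one, smul_zero]

lemma mu1_omK : mu1 omK = 0 := by
  rw [omK, map_add, mu1_mul, mu1_mul, mu1_wK, mu1_zK]
  simp only [zero_mul, mul_zero, add_zero, zero_add]

lemma mu1_sq : ∀ x : R0dual, mu1 (mu1 x) = 0 := by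
  apply R0dual_induction
  · intro r; rw [mu1_algebraMap, map_zero]
  · rw [mu1_wK, map_zero]
  · rw [mu1_zK, map_zero]
  · rw [mu1_thK]; exact mu1_omK
  · intro x y hx hy; rw [map_add, map_add, hx, hy, add_zero]
  · intro x y hx hy
    rw [mu1_mul, map_add, mu1_mul, mu1_mul, hx, hy, zero_mul, mul_zero, zero_add, add_zero]
    exact addSelf _
-- PART 3: the map q and the structure of extAlg
noncomputable def qPre : FreeAlgebra (ZMod 2) (Fin 3) →ₐ[ZMod 2] extAlg :=
  FreeAlgebra.lift (ZMod 2) ![wE, zE, 0]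

lemma qPre_rel : ∀ x y, relK x y → qPre x = qPre y := by
  intro x y h
  induction h with
  | wsq =>
      simp only [qPre, map_mul, map_zero, FreeAlgebra.lift_ι_apply, Matrix.cons_val_zero]
      exact wE_sq
  | zsq =>
      simp only [qPre, map_mul, map_zero, FreeAlgebra.lift_ι_apply, Matrix.cons_val_one,
        Matrix.head_cons, Matrix.cons_val_zero]
      exact zE_sq
  | thsq =>
      simp only [qPre, map_mul, map_zero, FreeAlgebra.lift_ι_apply]
      rw [show (![wE, zE, 0] : Fin 3 → extAlg) 2 = 0 from rfl, zero_mul]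
  | wth =>
      simp only [qPre, map_mul, FreeAlgebra.lift_ι_apply]
      rw [show (![wE, zE, 0] : Fin 3 → extAlg) 2 = 0 from rfl, zero_mul, mul_zero]
  | zth =>
      simp only [qPre, map_mul, FreeAlgebra.lift_ι_apply]
      rw [show (![wE, zE, 0] : Fin 3 → extAlg) 2 = 0 from rfl, zero_mul, mul_zero]

noncomputable def qE : R0dual →ₐ[ZMod 2] extAlg :=
  RingQuot.liftAlgHom (ZMod 2) ⟨qPre, qPre_rel⟩

lemma qE_mk (u : FreeAlgebra (ZMod 2) (Fin 3)) :
    qE (RingQuot.mkAlgHom (ZMod 2) relK u) = qPre u :=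
  RingQuot.liftAlgHom_mkAlgHom_apply _ _ _ _

lemma qE_wK : qE wK = wE := by
  conv_lhs => rw [show wK = RingQuot.mkAlgHom (ZMod 2) relK (FreeAlgebra.ι (ZMod 2) 0) from
    (mkK _).symm, qE_mk]
  simp [qPre]

lemma qE_zK : qE zK = zE := by
  conv_lhs => rw [show zK = RingQuot.mkAlgHom (ZMod 2) relK (FreeAlgebra.ι (ZMod 2) 1) from
    (mkK _).symm, qE_mk]
  simp [qPre]

lemma qE_thK : qE thK = 0 := by
  conv_lhs => rw [show thK = RingQuot.mkAlgHom (ZMod 2) relK (FreeAlgebra.ι (ZMod 2) 2) from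
    (mkK _).symm, qE_mk]
  simp only [qPre, FreeAlgebra.lift_ι_apply]
  rfl

lemma qE_omK : qE omK = 0 := by
  rw [omK, map_add, map_mul, map_mul, qE_wK, qE_zK, wzE_comm]
  exact addSelf _

lemma qE_mu1 : ∀ x : R0dual, qE (mu1 x) = 0 := by
  apply R0dual_induction
  · intro r; rw [mu1_algebraMap, map_zero]
  · rw [mu1_wK, map_zero]
  · rw [mu1_zK, map_zero]
  · rw [mu1_thK]; exact qE_omK
  · intro x y hx hy; rw [map_add, map_add, hx, hy, add_zero]
  · intro x y hx hy
    rw [mu1_mul, map_add, map_mul, map_mul, hx, hy, zero_mul, mul_zero, add_zero]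

-- The 4-dimensional concrete model
open TrivSqZeroExt

abbrev C4 := DualNumber (DualNumber (ZMod 2))

noncomputable def wC : C4 := inl (inr 1)
noncomputable def zC : C4 := inr 1

lemma wC_sq : wC * wC = 0 := by
  rw [wC, inl_mul_inl, inr_mul_inr, inl_zero]

lemma zC_sq : zC * zC = 0 := by
  rw [zC, inr_mul_inr]

lemma wzC : wC * zC = inr (inr 1) := by
  rw [wC, zC, inl_mul_inr, smul_eq_mul, mul_one]

lemma wzC_comm : wC * zC = zC * wC := by
  rw [wzC, wC, zC, inr_mul_inl, op_smul_eq_mul, one_mul]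

noncomputable def kapPre : FreeAlgebra (ZMod 2) (Fin 2) →ₐ[ZMod 2] C4 :=
  FreeAlgebra.lift (ZMod 2) ![wC, zC]

lemma kapPre_rel : ∀ x y, relE x y → kapPre x = kapPre y := by
  intro x y h
  induction h with
  | wsq =>
      simp only [kapPre, map_mul, map_zero, FreeAlgebra.lift_ι_apply, Matrix.cons_val_zero]
      exact wC_sq
  | zsq =>
      simp only [kapPre, map_mul, map_zero, FreeAlgebra.lift_ι_apply, Matrix.cons_val_one,
        Matrix.head_cons, Matrix.cons_val_zero]
      exact zC_sq
  | comm =>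
      simp only [kapPre, map_mul, FreeAlgebra.lift_ι_apply, Matrix.cons_val_zero,
        Matrix.cons_val_one, Matrix.head_cons]
      exact wzC_comm

noncomputable def kapC : extAlg →ₐ[ZMod 2] C4 :=
  RingQuot.liftAlgHom (ZMod 2) ⟨kapPre, kapPre_rel⟩

lemma kapC_mk (u : FreeAlgebra (ZMod 2) (Fin 2)) :
    kapC (RingQuot.mkAlgHom (ZMod 2) relE u) = kapPre u :=
  RingQuot.liftAlgHom_mkAlgHom_apply _ _ _ _

lemma kapC_wE : kapC wE = wC := by
  conv_lhs => rw [show wE = RingQuot.mkAlgHom (ZMod 2) relE (FreeAlgebra.ι (ZMod 2) 0) from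
    (mkE _).symm, kapC_mk]
  simp [kapPre]

lemma kapC_zE : kapC zE = zC := by
  conv_lhs => rw [show zE = RingQuot.mkAlgHom (ZMod 2) relE (FreeAlgebra.ι (ZMod 2) 1) from
    (mkE _).symm, kapC_mk]
  simp [kapPre]

lemma linIndC : LinearIndependent (ZMod 2) ![(1 : C4), wC, zC, wC * zC] := by
  rw [Fintype.linearIndependent_iff]
  intro g hg
  rw [Fin.sum_univ_four] at hg
  simp only [Matrix.cons_val_zero, Matrix.cons_val_one, Matrix.head_cons, wzC] at hg
  have h0 := congrArg (fun x : C4 => x.fst.fst) hg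
  have h1 := congrArg (fun x : C4 => x.fst.snd) hg
  have h2 := congrArg (fun x : C4 => x.snd.fst) hg
  have h3 := congrArg (fun x : C4 => x.snd.snd) hg
  simp only [wC, zC, fst_add, snd_add, fst_smul, snd_smul, fst_inl, snd_inl, fst_inr, snd_inr,
    fst_one, snd_one, smul_zero, add_zero, zero_add, smul_eq_mul, mul_one, fst_zero, snd_zero]
    at h0 h1 h2 h3
  intro i
  fin_cases i <;> simp_all
-- PART 4: basis of extAlg
lemma kapC_comp :
    (kapC.toLinearMap : extAlg →ₗ[ZMod 2] C4) ∘ ![(1 : extAlg), wE, zE, wE * zE]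
      = ![(1 : C4), wC, zC, wC * zC] := by
  funext i
  fin_cases i <;>
    simp [kapC_wE, kapC_zE, map_one, map_mul]

lemma linIndE : LinearIndependent (ZMod 2) ![(1 : extAlg), wE, zE, wE * zE] := by
  apply LinearIndependent.of_comp kapC.toLinearMap
  rw [kapC_comp]
  exact linIndC

lemma zwE : zE * wE = wE * zE := wzE_comm.symm

lemma prodE :
    ∀ x ∈ ({(1 : extAlg), wE, zE, wE * zE} : Set extAlg),
    ∀ y ∈ ({(1 : extAlg), wE, zE, wE * zE} : Set extAlg),
    x * y ∈ Submodule.span (ZMod 2) ({(1 : extAlg), wE, zE, wE * zE} : Set extAlg) := by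
  have mem : ∀ u ∈ ({(1 : extAlg), wE, zE, wE * zE} : Set extAlg),
      u ∈ Submodule.span (ZMod 2) ({(1 : extAlg), wE, zE, wE * zE} : Set extAlg) :=
    fun u hu => Submodule.subset_span hu
  have h1 : (1 : extAlg) ∈ ({(1 : extAlg), wE, zE, wE * zE} : Set extAlg) := by simp
  have hw : wE ∈ ({(1 : extAlg), wE, zE, wE * zE} : Set extAlg) := by simp
  have hz : zE ∈ ({(1 : extAlg), wE, zE, wE * zE} : Set extAlg) := by simp
  have hwz : wE * zE ∈ ({(1 : extAlg), wE, zE, wE * zE} : Set extAlg) := by simp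
  have hwzw : wE * zE * wE = 0 := by
    rw [mul_assoc, ← wzE_comm, ← mul_assoc, wE_sq, zero_mul]
  have hwzz : wE * zE * zE = 0 := by rw [mul_assoc, zE_sq, mul_zero]
  have hzwz : zE * (wE * zE) = 0 := by
    rw [← mul_assoc, zwE, mul_assoc, zE_sq, mul_zero]
  have hwwz : wE * (wE * zE) = 0 := by rw [← mul_assoc, wE_sq, zero_mul]
  have hwzwz : wE * zE * (wE * zE) = 0 := by rw [← mul_assoc, hwzw, zero_mul]
  intro x hx y hy
  rcases hx with rfl | rfl | rfl | rfl <;> rcases hy with rfl | rfl | rfl | rfl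
  all_goals try simp only [one_mul, mul_one, wE_sq, zE_sq, zwE, hwzw, hwzz, hzwz, hwwz, hwzwz]
  all_goals
    first
      | exact Submodule.zero_mem _
      | exact mem _ h1 | exact mem _ hw | exact mem _ hz | exact mem _ hwz

lemma spanE : Submodule.span (ZMod 2) ({(1 : extAlg), wE, zE, wE * zE} : Set extAlg) = ⊤ := by
  set P := Submodule.span (ZMod 2) ({(1 : extAlg), wE, zE, wE * zE} : Set extAlg) with hP
  have h1 : (1 : extAlg) ∈ P := Submodule.subset_span (by simp)
  have hw : wE ∈ P := Submodule.subset_span (by simp)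
  have hz : zE ∈ P := Submodule.subset_span (by simp)
  have hmul : ∀ x ∈ P, ∀ y ∈ P, x * y ∈ P := by
    intro x hx y hy
    induction hx using Submodule.span_induction with
    | mem a ha =>
        induction hy using Submodule.span_induction with
        | mem b hb => exact prodE a ha b hb
        | zero => rw [mul_zero]; exact Submodule.zero_mem _
        | add b c _ _ hb hc => rw [mul_add]; exact Submodule.add_mem _ hb hc
        | smul r b _ hb => rw [mul_smul_comm]; exact Submodule.smul_mem _ _ hb
    | zero => rw [zero_mul]; exact Submodule.zero_mem _
    | add a b _ _ ha hb => rw [add_mul]; exact Submodule.add_mem _ ha hb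
    | smul r a _ ha => rw [smul_mul_assoc]; exact Submodule.smul_mem _ _ ha
  rw [Submodule.eq_top_iff']
  apply extAlg_induction
  · intro r; rw [Algebra.algebraMap_eq_smul_one]; exact Submodule.smul_mem _ _ h1
  · exact hw
  · exact hz
  · intro x y hx hy; exact Submodule.add_mem _ hx hy
  · intro x y hx hy; exact hmul x hx y hy

lemma range4 :
    Set.range ![(1 : extAlg), wE, zE, wE * zE] = {(1 : extAlg), wE, zE, wE * zE} := by
  ext x
  simp [Fin.exists_fin_succ, Matrix.range_cons, Matrix.range_empty]
  tauto

noncomputable def basisE : Module.Basis (Fin 4) (ZMod 2) extAlg :=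
  Module.Basis.mk linIndE (by rw [range4, spanE])

lemma basisE_apply (i : Fin 4) : basisE i = ![(1 : extAlg), wE, zE, wE * zE] i := by
  rw [basisE, Module.Basis.coe_mk]

lemma finrankE : Module.finrank (ZMod 2) extAlg = 4 := by
  rw [Module.finrank_eq_card_basis basisE, Fintype.card_fin]
-- PART 5: the infinite dihedral group
def rels : Set (FreeGroup (Fin 2)) :=
  {FreeGroup.of 0 * FreeGroup.of 0, FreeGroup.of 1 * FreeGroup.of 1}

abbrev GD := PresentedGroup rels

def ga : GD := PresentedGroup.of 0
def gb : GD := PresentedGroup.of 1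
def gc : GD := ga * gb

lemma ga_sq : ga * ga = 1 := by
  show (QuotientGroup.mk (FreeGroup.of 0 * FreeGroup.of 0) : GD) = 1
  rw [QuotientGroup.eq_one_iff]
  exact Subgroup.subset_normalClosure (by left; rfl)

lemma gb_sq : gb * gb = 1 := by
  show (QuotientGroup.mk (FreeGroup.of 1 * FreeGroup.of 1) : GD) = 1
  rw [QuotientGroup.eq_one_iff]
  exact Subgroup.subset_normalClosure (by right; rfl)

lemma ga_inv : ga⁻¹ = ga := inv_eq_of_mul_eq_one_right ga_sq
lemma gb_inv : gb⁻¹ = gb := inv_eq_of_mul_eq_one_right gb_sq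
lemma gc_inv : gc⁻¹ = gb * ga := by
  rw [gc, mul_inv_rev, ga_inv, gb_inv]

-- induction principle for GD
lemma GD_induction {P : GD → Prop} (h1 : P 1) (ha : P ga) (hb : P gb)
    (hinv : ∀ g, P g → P g⁻¹) (hmul : ∀ g h, P g → P h → P (g * h)) : ∀ g, P g := by
  intro g
  obtain ⟨w, rfl⟩ := PresentedGroup.mk_surjective rels g
  induction w using FreeGroup.induction_on with
  | C1 => exact h1
  | of i =>
      fin_cases i
      · exact ha
      · exact hb
  | inv_of i hi => rw [map_inv]; exact hinv _ hi
  | mul x y hx hy => rw [map_mul]; exact hmul _ _ hx hy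

-- permutation representation
def permF : Fin 2 → Equiv.Perm ℤ := ![Equiv.subLeft 0, Equiv.subLeft 1]

lemma perm_rel : ∀ r ∈ rels, FreeGroup.lift permF r = 1 := by
  intro r hr
  rcases hr with rfl | rfl <;>
  · rw [map_mul, FreeGroup.lift_apply_of]
    ext x
    simp [permF, Equiv.Perm.mul_apply]

def nuP : GD →* Equiv.Perm ℤ := PresentedGroup.toGroup perm_rel

lemma nuP_gc : ∀ x : ℤ, nuP gc x = x - 1 := by
  intro x
  rw [gc, map_mul, nuP, show ga = PresentedGroup.of (rels := rels) 0 from rfl,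
    show gb = PresentedGroup.of (rels := rels) 1 from rfl,
    PresentedGroup.toGroup.of, PresentedGroup.toGroup.of]
  simp [permF, Equiv.Perm.mul_apply]

lemma nuP_gc_pow : ∀ (n : ℕ) (x : ℤ), (nuP gc ^ n) x = x - n := by
  intro n
  induction n with
  | zero => intro x; simp
  | succ n ih =>
      intro x
      rw [pow_succ, Equiv.Perm.mul_apply, nuP_gc]
      rw [ih]
      push_cast
      ring

lemma gc_pow_injective : Function.Injective (fun n : ℕ => gc ^ (2 * n)) := by
  intro m n h
  have := congrArg (fun g => (nuP g) 0) h
  simp only [map_pow] at this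
  rw [nuP_gc_pow, nuP_gc_pow] at this
  omega
-- PART 6: the group algebra model
abbrev AG := MonoidAlgebra (ZMod 2) GD

noncomputable def ofG : GD →* AG := MonoidAlgebra.of (ZMod 2) GD

noncomputable def omA : AG := ofG gc + ofG gc⁻¹

lemma ofG_apply (g : GD) : ofG g = MonoidAlgebra.single g 1 := rfl

-- regularity of omA
lemma omA_regular (v : AG) (h : v * omA = 0) : v = 0 := by
  by_contra hv
  obtain ⟨u0, hu0⟩ := Finsupp.support_nonempty_iff.mpr (MonoidAlgebra.coeff_eq_zero.not.mpr hv)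
  have key : ∀ u : GD, v.coeff (u * gc⁻¹) = v.coeff (u * gc) := by
    intro u
    have := congrArg (fun x : AG => x.coeff u) h
    simp only [omA, mul_add, ofG_apply] at this
    rw [MonoidAlgebra.coeff_add, Finsupp.add_apply, MonoidAlgebra.coeff_mul_single_apply,
      MonoidAlgebra.coeff_mul_single_apply,
      inv_inv, mul_one, mul_one, MonoidAlgebra.coeff_zero, Finsupp.coe_zero, Pi.zero_apply] at this
    have h2 : ∀ x y : ZMod 2, x + y = 0 → x = y := by decide
    exact h2 _ _ this
  have key2 : ∀ u : GD, v.coeff u = v.coeff (u * (gc * gc)) := by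
    intro u
    have := key (u * gc)
    rw [mul_assoc, mul_inv_cancel, mul_one] at this
    rw [this, mul_assoc]
  have vals : ∀ n : ℕ, v.coeff (u0 * gc ^ (2 * n)) = v.coeff u0 := by
    intro n
    induction n with
    | zero => simp
    | succ n ih =>
        rw [show 2 * (n + 1) = 2 * n + 2 by ring, pow_add, ← mul_assoc, pow_two, ← key2, ih]
  have hinj : Function.Injective (fun n : ℕ => u0 * gc ^ (2 * n)) := by
    intro m n hmn
    exact gc_pow_injective (mul_left_cancel hmn)
  have hmem : ∀ n : ℕ, u0 * gc ^ (2 * n) ∈ (v.coeff.support : Set GD) := by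
    intro n
    rw [Finset.mem_coe, Finsupp.mem_support_iff, vals]
    exact Finsupp.mem_support_iff.mp hu0
  exact (Set.infinite_of_injective_forall_mem hinj hmem) v.coeff.support.finite_toSet

-- the map back to R0dual
noncomputable def uW : R0dualˣ where
  val := 1 + wK
  inv := 1 + wK
  val_inv := by
    rw [mul_add, mul_one, add_mul, one_mul, wK_sq, add_zero, add_assoc, addSelf, add_zero]
  inv_val := by
    rw [mul_add, mul_one, add_mul, one_mul, wK_sq, add_zero, add_assoc, addSelf, add_zero]

noncomputable def uZ : R0dualˣ where
  val := 1 + zK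
  inv := 1 + zK
  val_inv := by
    rw [mul_add, mul_one, add_mul, one_mul, zK_sq, add_zero, add_assoc, addSelf, add_zero]
  inv_val := by
    rw [mul_add, mul_one, add_mul, one_mul, zK_sq, add_zero, add_assoc, addSelf, add_zero]

lemma unit_rel : ∀ r ∈ rels, FreeGroup.lift ![uW, uZ] r = 1 := by
  intro r hr
  rcases hr with rfl | rfl <;>
  · rw [map_mul, FreeGroup.lift_apply_of]
    ext
    simp only [Units.val_mul, Units.val_one]
    first
      | exact uW.val_inv
      | exact uZ.val_inv

noncomputable def nuU : GD →* R0dualˣ := PresentedGroup.toGroup unit_rel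

noncomputable def nu0 : GD →* R0dual := (Units.coeHom R0dual).comp nuU

lemma nu0_ga : nu0 ga = 1 + wK := by
  rw [nu0, MonoidHom.comp_apply, nuU, show ga = PresentedGroup.of (rels := rels) 0 from rfl,
    PresentedGroup.toGroup.of]
  rfl

lemma nu0_gb : nu0 gb = 1 + zK := by
  rw [nu0, MonoidHom.comp_apply, nuU, show gb = PresentedGroup.of (rels := rels) 1 from rfl,
    PresentedGroup.toGroup.of]
  rfl

noncomputable def PsiA : AG →ₐ[ZMod 2] R0dual := MonoidAlgebra.lift (ZMod 2) R0dual GD nu0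

lemma PsiA_of (g : GD) : PsiA (ofG g) = nu0 g := by
  rw [PsiA, ofG_apply, MonoidAlgebra.lift_single, one_smul]
-- PART 7: the embedding Phi and retraction psi
lemma negSelf {A : Type*} [AddCommGroup A] [Module (ZMod 2) A] (x : A) : -x = x :=
  neg_eq_of_add_eq_zero_left (addSelf x)

lemma eq_of_add_eq_zero' {A : Type*} [AddCommGroup A] [Module (ZMod 2) A] {x y : A}
    (h : x + y = 0) : x = y := by
  have := neg_eq_of_add_eq_zero_left h
  rw [negSelf] at this
  exact this.symm

lemma conj_comm {A : Type*} [Monoid A] {u u' x : A} (h1 : u * u' = 1) (h2 : u' * u = 1)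
    (h : u * x = x * u) : u' * x = x * u' := by
  have key : u' * (u * x) * u' = u' * (x * u) * u' := by rw [h]
  rw [← mul_assoc, ← mul_assoc, h2, one_mul, mul_assoc, mul_assoc, h1, mul_one] at key
  exact key.symm

noncomputable def wA : AG := 1 + ofG ga
noncomputable def zA : AG := 1 + ofG gb

open TrivSqZeroExt

lemma invol_sq (s : AG) (h : s * s = 1) : (1 + s) * (1 + s) = 0 := by
  rw [mul_add, mul_one, add_mul, one_mul, h]
  have : (1 : AG) + s + (s + 1) = (1 + 1) + (s + s) := by abel
  rw [this, addSelf, addSelf, add_zero]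

lemma wA_sq : wA * wA = 0 := invol_sq _ (by rw [← map_mul, ga_sq, map_one])
lemma zA_sq : zA * zA = 0 := invol_sq _ (by rw [← map_mul, gb_sq, map_one])

lemma omAeq : wA * zA + zA * wA = omA := by
  apply eq_of_add_eq_zero'
  have hab : ofG ga * ofG gb = ofG gc := by rw [← map_mul]; rfl
  have hba : ofG gb * ofG ga = ofG gc⁻¹ := by rw [← map_mul, gc_inv]
  rw [wA, zA, omA, mul_add, mul_one, add_mul, one_mul, mul_add, mul_one, add_mul, one_mul,
    hab, hba]
  have : (1 : AG) + ofG ga + (ofG gb + ofG gc) + (1 + ofG gb + (ofG ga + ofG gc⁻¹))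
      + (ofG gc + ofG gc⁻¹)
      = ((1 : AG) + 1) + (ofG ga + ofG ga) + (ofG gb + ofG gb) + (ofG gc + ofG gc)
        + (ofG gc⁻¹ + ofG gc⁻¹) := by abel
  rw [this]
  simp [addSelf]

-- centrality of omA
lemma omA_comm_g : ∀ g : GD, ofG g * omA = omA * ofG g := by
  have hga : ofG ga * omA = omA * ofG ga := by
    have h1 : ga * gc = gc⁻¹ * ga := by
      rw [gc_inv, gc, ← mul_assoc, ga_sq, one_mul, mul_assoc, ga_sq, mul_one]
    have h2 : ga * gc⁻¹ = gc * ga := by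
      rw [gc_inv, gc, ← mul_assoc]
    rw [omA, mul_add, add_mul, ← map_mul, ← map_mul, ← map_mul, ← map_mul, h1, h2, add_comm]
  have hgb : ofG gb * omA = omA * ofG gb := by
    have h1 : gb * gc = gc⁻¹ * gb := by
      rw [gc_inv, gc, ← mul_assoc]
    have h2 : gb * gc⁻¹ = gc * gb := by
      rw [gc_inv, gc, ← mul_assoc, gb_sq, one_mul, mul_assoc, gb_sq, mul_one]
    rw [omA, mul_add, add_mul, ← map_mul, ← map_mul, ← map_mul, ← map_mul, h1, h2, add_comm]
  apply GD_induction
  · rw [map_one, one_mul, mul_one]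
  · exact hga
  · exact hgb
  · intro g hg
    have h1 : ofG g * ofG g⁻¹ = 1 := by rw [← map_mul, mul_inv_cancel, map_one]
    have h2 : ofG g⁻¹ * ofG g = 1 := by rw [← map_mul, inv_mul_cancel, map_one]
    exact conj_comm h1 h2 hg
  · intro g h hg hh
    rw [map_mul, mul_assoc, hh, ← mul_assoc, hg, mul_assoc]

lemma AG_induction {P : AG → Prop} (h0 : P 0)
    (hs : ∀ (r : ZMod 2) (g : GD), P (r • ofG g))
    (hadd : ∀ x y, P x → P y → P (x + y)) : ∀ x, P x := by
  intro x
  induction x using MonoidAlgebra.induction_linear with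
  | zero => exact h0
  | add f g hf hg => exact hadd _ _ hf hg
  | single g r =>
      have hse : (MonoidAlgebra.single g r : AG) = r • ofG g := by
        rw [ofG_apply]
        rw [MonoidAlgebra.smul_single', mul_one]
      rw [show (MonoidAlgebra.single g r : AG) = r • ofG g from hse]
      exact hs r g

lemma omA_central : ∀ x : AG, x * omA = omA * x := by
  apply AG_induction
  · rw [zero_mul, mul_zero]
  · intro r g
    rw [smul_mul_assoc, omA_comm_g, mul_smul_comm]
  · intro x y hx hy
    rw [add_mul, hx, hy, mul_add]
-- PART 8: Phi
noncomputable def PhiPre : FreeAlgebra (ZMod 2) (Fin 3) →ₐ[ZMod 2] DualNumber AG :=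
  FreeAlgebra.lift (ZMod 2) ![inl wA, inl zA, inr 1]

lemma PhiPre_rel : ∀ x y, relK x y → PhiPre x = PhiPre y := by
  intro x y h
  have e0 : (![inl wA, inl zA, inr 1] : Fin 3 → DualNumber AG) 0 = inl wA := rfl
  have e1 : (![inl wA, inl zA, inr 1] : Fin 3 → DualNumber AG) 1 = inl zA := rfl
  have e2 : (![inl wA, inl zA, inr 1] : Fin 3 → DualNumber AG) 2 = inr 1 := rfl
  induction h with
  | wsq =>
      simp only [PhiPre, map_mul, map_zero, FreeAlgebra.lift_ι_apply, e0]
      rw [inl_mul_inl, wA_sq, inl_zero]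
  | zsq =>
      simp only [PhiPre, map_mul, map_zero, FreeAlgebra.lift_ι_apply, e1]
      rw [inl_mul_inl, zA_sq, inl_zero]
  | thsq =>
      simp only [PhiPre, map_mul, map_zero, FreeAlgebra.lift_ι_apply, e2]
      rw [inr_mul_inr]
  | wth =>
      simp only [PhiPre, map_mul, FreeAlgebra.lift_ι_apply, e0, e2]
      rw [inl_mul_inr, inr_mul_inl, smul_eq_mul, op_smul_eq_mul, mul_one, one_mul]
  | zth =>
      simp only [PhiPre, map_mul, FreeAlgebra.lift_ι_apply, e1, e2]
      rw [inl_mul_inr, inr_mul_inl, smul_eq_mul, op_smul_eq_mul, mul_one, one_mul]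

noncomputable def Phi : R0dual →ₐ[ZMod 2] DualNumber AG :=
  RingQuot.liftAlgHom (ZMod 2) ⟨PhiPre, PhiPre_rel⟩

lemma Phi_mk (u : FreeAlgebra (ZMod 2) (Fin 3)) :
    Phi (RingQuot.mkAlgHom (ZMod 2) relK u) = PhiPre u :=
  RingQuot.liftAlgHom_mkAlgHom_apply _ _ _ _

lemma Phi_wK : Phi wK = inl wA := by
  conv_lhs => rw [show wK = RingQuot.mkAlgHom (ZMod 2) relK (FreeAlgebra.ι (ZMod 2) 0) from
    (mkK _).symm, Phi_mk]
  simp [PhiPre]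

lemma Phi_zK : Phi zK = inl zA := by
  conv_lhs => rw [show zK = RingQuot.mkAlgHom (ZMod 2) relK (FreeAlgebra.ι (ZMod 2) 1) from
    (mkK _).symm, Phi_mk]
  simp [PhiPre]

lemma Phi_thK : Phi thK = inr 1 := by
  conv_lhs => rw [show thK = RingQuot.mkAlgHom (ZMod 2) relK (FreeAlgebra.ι (ZMod 2) 2) from
    (mkK _).symm, Phi_mk]
  simp only [PhiPre, FreeAlgebra.lift_ι_apply]
  rfl

lemma Phi_omK : Phi omK = inl omA := by
  rw [omK, map_add, map_mul, map_mul, Phi_wK, Phi_zK, inl_mul_inl, inl_mul_inl, ← inl_add, omAeq]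

lemma Phi_mu : ∀ x : R0dual, Phi (mu1 x) = inl ((Phi x).snd * omA) := by
  apply R0dual_induction
  · intro r
    rw [mu1_algebraMap, map_zero, AlgHom.commutes, algebraMap_eq_inl', snd_inl, zero_mul, inl_zero]
  · rw [mu1_wK, map_zero, Phi_wK, snd_inl, zero_mul, inl_zero]
  · rw [mu1_zK, map_zero, Phi_zK, snd_inl, zero_mul, inl_zero]
  · rw [mu1_thK, Phi_omK, Phi_thK, snd_inr, one_mul]
  · intro x y hx hy
    rw [map_add, map_add, hx, hy, map_add, snd_add, add_mul, inl_add]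
  · intro x y hx hy
    rw [mu1_mul, map_add, map_mul, map_mul, hx, hy, map_mul]
    refine TrivSqZeroExt.ext ?_ ?_
    · simp only [fst_add, fst_mul, fst_inl, snd_mul, smul_eq_mul, op_smul_eq_mul]
      have h1 : (Phi x).snd * omA * (Phi y).fst = (Phi x).snd * (Phi y).fst * omA := by
        rw [mul_assoc, ← omA_central, ← mul_assoc]
      rw [h1, ← mul_assoc, add_mul, add_comm]
    · simp only [snd_add, snd_mul, fst_inl, snd_inl, fst_mul, smul_eq_mul, op_smul_eq_mul,
        mul_zero, add_zero, zero_add]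
      have h1 : (Phi x).snd * omA * (Phi y).snd = (Phi x).snd * (Phi y).snd * omA := by
        rw [mul_assoc, ← omA_central, ← mul_assoc]
      rw [h1, zero_mul, add_zero, ← mul_assoc, addSelf]

-- PART 9: psi
noncomputable def psi (u : DualNumber AG) : R0dual := PsiA u.fst + PsiA u.snd * thK

lemma th_comm_g : ∀ g : GD, nu0 g * thK = thK * nu0 g := by
  apply GD_induction
  · rw [map_one, one_mul, mul_one]
  · rw [nu0_ga, add_mul, mul_add, one_mul, mul_one, wth_comm]
  · rw [nu0_gb, add_mul, mul_add, one_mul, mul_one, zth_comm]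
  · intro g hg
    have h1 : nu0 g * nu0 g⁻¹ = 1 := by rw [← map_mul, mul_inv_cancel, map_one]
    have h2 : nu0 g⁻¹ * nu0 g = 1 := by rw [← map_mul, inv_mul_cancel, map_one]
    exact conj_comm h1 h2 hg
  · intro g h hg hh
    rw [map_mul, mul_assoc, hh, ← mul_assoc, hg, mul_assoc]

lemma th_comm : ∀ v : AG, PsiA v * thK = thK * PsiA v := by
  apply AG_induction
  · rw [map_zero, zero_mul, mul_zero]
  · intro r g
    rw [map_smul, smul_mul_assoc, PsiA_of, th_comm_g, mul_smul_comm]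
  · intro x y hx hy
    rw [map_add, add_mul, hx, hy, mul_add]

lemma psi_mul (u v : DualNumber AG) : psi (u * v) = psi u * psi v := by
  simp only [psi]
  rw [fst_mul, snd_mul, smul_eq_mul, op_smul_eq_mul, map_mul, map_add,
    map_mul, map_mul]
  have h1 : PsiA u.snd * thK * PsiA v.fst = PsiA u.snd * PsiA v.fst * thK := by
    rw [mul_assoc, ← th_comm, ← mul_assoc]
  have h2 : PsiA u.snd * thK * (PsiA v.snd * thK) = 0 := by
    rw [mul_assoc, ← mul_assoc thK, ← th_comm, mul_assoc, thK_sq, mul_zero, mul_zero]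
  simp only [mul_add, add_mul]
  rw [h1, h2, add_zero, ← mul_assoc]
  abel

lemma psi_Phi : ∀ x : R0dual, psi (Phi x) = x := by
  apply R0dual_induction
  · intro r
    rw [AlgHom.commutes, algebraMap_eq_inl']
    simp only [psi, fst_inl, snd_inl, map_zero, zero_mul, add_zero]
    rw [AlgHom.commutes]
  · rw [Phi_wK]
    simp only [psi]
    rw [fst_inl, snd_inl, map_zero, zero_mul, add_zero, wA, map_add, map_one,
      PsiA_of, nu0_ga, ← add_assoc, addSelf, zero_add]
  · rw [Phi_zK]
    simp only [psi]
    rw [fst_inl, snd_inl, map_zero, zero_mul, add_zero, zA, map_add, map_one,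
      PsiA_of, nu0_gb, ← add_assoc, addSelf, zero_add]
  · rw [Phi_thK]
    simp only [psi]
    rw [fst_inr, snd_inr, map_zero, map_one, zero_add, one_mul]
  · intro x y hx hy
    rw [map_add]
    simp only [psi]
    rw [fst_add, snd_add, map_add, map_add, add_mul]
    simp only [psi] at hx hy
    rw [show PsiA (Phi x).fst + PsiA (Phi y).fst
        + (PsiA (Phi x).snd * thK + PsiA (Phi y).snd * thK)
        = PsiA (Phi x).fst + PsiA (Phi x).snd * thK
          + (PsiA (Phi y).fst + PsiA (Phi y).snd * thK) from by abel, hx, hy]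
  · intro x y hx hy
    rw [map_mul, psi_mul, hx, hy]
-- PART 10: the coset decomposition submodule
lemma GD_induction' {P : GD → Prop} (h1 : P 1) (ha : P ga) (hb : P gb)
    (hmul : ∀ g h, P g → P h → P (g * h)) : ∀ g, P g := by
  intro g
  obtain ⟨w, rfl⟩ := PresentedGroup.mk_surjective rels g
  induction w using FreeGroup.induction_on with
  | C1 => exact h1
  | of i =>
      fin_cases i
      · exact ha
      · exact hb
  | inv_of i hi =>
      rw [map_inv]
      fin_cases i
      · show P ga⁻¹
        rw [ga_inv]; exact ha
      · show P gb⁻¹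
        rw [gb_inv]; exact hb
  | mul x y hx hy => rw [map_mul]; exact hmul _ _ hx hy

noncomputable def eA : Fin 4 → AG := ![1, ofG gc, ofG ga, ofG (gc * ga)]

noncomputable def Vmod : Submodule (ZMod 2) AG :=
  LinearMap.range (LinearMap.mulRight (ZMod 2) omA) ⊔
    Submodule.span (ZMod 2) (Set.range eA)

lemma mem_V_intro (p : AG) (c : Fin 4 → ZMod 2) :
    p * omA + ∑ i, c i • eA i ∈ Vmod := by
  apply Submodule.add_mem
  · exact Submodule.mem_sup_left ⟨p, rfl⟩
  · exact Submodule.mem_sup_right (Submodule.sum_mem _ fun i _ =>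
      Submodule.smul_mem _ _ (Submodule.subset_span ⟨i, rfl⟩))

lemma mem_V_elim {x : AG} (hx : x ∈ Vmod) :
    ∃ (p : AG) (c : Fin 4 → ZMod 2), x = p * omA + ∑ i, c i • eA i := by
  rw [Vmod, Submodule.mem_sup] at hx
  obtain ⟨y, hy, z, hz, rfl⟩ := hx
  obtain ⟨p, rfl⟩ := hy
  obtain ⟨c, rfl⟩ := Submodule.mem_span_range_iff_exists_fun (ZMod 2) |>.mp hz
  exact ⟨p, c, rfl⟩

lemma omA_shift (p x : AG) : p * omA * x = p * x * omA := by
  rw [mul_assoc, ← omA_central, ← mul_assoc]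

lemma ofG_sq_up : ofG (gc * gc) = ofG gc * omA + 1 := by
  rw [omA, mul_add, ← map_mul, ← map_mul, mul_inv_cancel, map_one, add_assoc, addSelf, add_zero]

lemma ofG_sq_down : ofG (gc⁻¹ * gc⁻¹) = ofG gc⁻¹ * omA + 1 := by
  rw [omA, mul_add, ← map_mul, ← map_mul, inv_mul_cancel, map_one, add_comm (1 : AG),
    add_assoc, addSelf, add_zero]

lemma step_mul (p q : AG) : (p * omA + 1) * (q * omA + 1)
    = (p * omA * q + p + q) * omA + 1 := by
  noncomm_ring

lemma LEMZ : ∀ n : ℤ, ∃ p : AG, ofG (gc ^ (2 * n)) = p * omA + 1 := by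
  intro n
  induction n using Int.induction_on with
  | zero => exact ⟨0, by rw [mul_zero, zpow_zero, map_one, zero_mul, zero_add]⟩
  | succ n ih =>
      obtain ⟨p, hp⟩ := ih
      refine ⟨p * omA * ofG gc + p + ofG gc, ?_⟩
      have hsplit : gc ^ (2 * ((n : ℤ) + 1)) = gc ^ (2 * (n : ℤ)) * (gc * gc) := by group
      rw [hsplit, map_mul, hp, ofG_sq_up, step_mul]
  | pred n ih =>
      obtain ⟨p, hp⟩ := ih
      refine ⟨p * omA * ofG gc⁻¹ + p + ofG gc⁻¹, ?_⟩
      have hsplit : gc ^ (2 * (-(n : ℤ) - 1)) = gc ^ (2 * (-(n : ℤ))) * (gc⁻¹ * gc⁻¹) := by group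
      rw [hsplit, map_mul, hp, ofG_sq_down, step_mul]

lemma one_mem_V : (1 : AG) ∈ Vmod := by
  apply Submodule.mem_sup_right
  exact Submodule.subset_span ⟨0, rfl⟩

lemma range_omA_le_V (p : AG) : p * omA ∈ Vmod := Submodule.mem_sup_left ⟨p, rfl⟩

lemma eA_mem_V (i : Fin 4) : eA i ∈ Vmod :=
  Submodule.mem_sup_right (Submodule.subset_span ⟨i, rfl⟩)

lemma V_mul_of : ∀ g : GD, ∀ v ∈ Vmod, v * ofG g ∈ Vmod := by
  have key : ∀ g : GD, (∀ i, eA i * ofG g ∈ Vmod) → ∀ v ∈ Vmod, v * ofG g ∈ Vmod := by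
    intro g he v hv
    obtain ⟨p, c, rfl⟩ := mem_V_elim hv
    rw [add_mul, omA_shift, Finset.sum_mul]
    apply Submodule.add_mem
    · exact range_omA_le_V _
    · refine Submodule.sum_mem _ fun i _ => ?_
      rw [smul_mul_assoc]
      exact Submodule.smul_mem _ _ (he i)
  apply GD_induction'
  · intro v hv; rwa [map_one, mul_one]
  · apply key
    intro i
    fin_cases i
    · show (1 : AG) * ofG ga ∈ Vmod
      rw [one_mul]
      exact eA_mem_V 2
    · show ofG gc * ofG ga ∈ Vmod
      rw [← map_mul]
      exact eA_mem_V 3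
    · show ofG ga * ofG ga ∈ Vmod
      rw [← map_mul, ga_sq, map_one]
      exact one_mem_V
    · show ofG (gc * ga) * ofG ga ∈ Vmod
      rw [← map_mul, mul_assoc, ga_sq, mul_one]
      exact eA_mem_V 1
  · apply key
    intro i
    fin_cases i
    · show (1 : AG) * ofG gb ∈ Vmod
      rw [one_mul]
      have hb : gb = gc ^ (2 * (-1) : ℤ) * (gc * ga) := by
        have h : gc⁻¹ * ga = gb := by rw [gc_inv, mul_assoc, ga_sq, mul_one]
        rw [← h]; group
      obtain ⟨p, hp⟩ := LEMZ (-1)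
      rw [hb, map_mul, hp, add_mul, one_mul, omA_shift]
      exact Submodule.add_mem _ (range_omA_le_V _) (eA_mem_V 3)
    · show ofG gc * ofG gb ∈ Vmod
      rw [← map_mul, gc, mul_assoc, gb_sq, mul_one]
      exact eA_mem_V 2
    · show ofG ga * ofG gb ∈ Vmod
      rw [← map_mul]
      exact eA_mem_V 1
    · show ofG (gc * ga) * ofG gb ∈ Vmod
      rw [← map_mul, mul_assoc, show ga * gb = gc from rfl]
      obtain ⟨p, hp⟩ := LEMZ 1
      have h2 : gc ^ (2 * (1:ℤ)) = gc * gc := by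
        rw [show (2 * (1:ℤ)) = 2 by ring, zpow_two]
      rw [← h2, hp]
      exact Submodule.add_mem _ (range_omA_le_V _) one_mem_V
  · intro g h hg hh v hv
    rw [map_mul, ← mul_assoc]
    exact hh _ (hg _ hv)

lemma V_top : ∀ x : AG, x ∈ Vmod := by
  apply AG_induction
  · exact Submodule.zero_mem _
  · intro r g
    apply Submodule.smul_mem
    have := V_mul_of g 1 one_mem_V
    rwa [one_mul] at this
  · intro x y hx hy
    exact Submodule.add_mem _ hx hy
-- PART 11: kappa computations
noncomputable def kap : AG →ₐ[ZMod 2] extAlg := qE.comp PsiA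

lemma kap_of (g : GD) : kap (ofG g) = qE (nu0 g) := by
  rw [kap, AlgHom.comp_apply, PsiA_of]

lemma kap_ga : kap (ofG ga) = 1 + wE := by
  rw [kap_of, nu0_ga, map_add, map_one, qE_wK]

lemma kap_gb : kap (ofG gb) = 1 + zE := by
  rw [kap_of, nu0_gb, map_add, map_one, qE_zK]

lemma ewzw : wE * zE * wE = 0 := by
  rw [mul_assoc, zwE, ← mul_assoc, wE_sq, zero_mul]

lemma exp1 : (1 + wE) * (1 + zE) = 1 + wE + zE + wE * zE := by
  simp only [add_mul, mul_add, one_mul, mul_one]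
  abel

lemma exp2 : (1 + zE) * (1 + wE) = 1 + wE + zE + wE * zE := by
  simp only [add_mul, mul_add, one_mul, mul_one, zwE]
  abel

lemma kap_gc : kap (ofG gc) = 1 + wE + zE + wE * zE := by
  show kap (ofG (ga * gb)) = _
  rw [map_mul, map_mul, kap_ga, kap_gb, exp1]

lemma kap_gcinv : kap (ofG gc⁻¹) = 1 + wE + zE + wE * zE := by
  rw [gc_inv, map_mul, map_mul, kap_gb, kap_ga, exp2]

lemma kap_omA : kap omA = 0 := by
  rw [omA, map_add, kap_gc, kap_gcinv, addSelf]

lemma kap_e3 : kap (ofG (gc * ga)) = 1 + zE := by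
  rw [map_mul, map_mul, kap_gc, kap_ga]
  apply eq_of_add_eq_zero'
  simp only [add_mul, mul_add, one_mul, mul_one, wE_sq, zwE, ewzw, add_zero]
  abel_nf
  simp [two_smul, addSelf, two_zsmul, two_nsmul,
    (by simpa [one_add_one_eq_two] using addSelf (1 : extAlg) : (2 : extAlg) = 0)]
-- PART 12: the main kernel lemma
lemma expK1 : (1 + wK) * (1 + zK) = 1 + wK + zK + wK * zK := by
  simp only [add_mul, mul_add, one_mul, mul_one]
  abel

lemma expK2 : (1 + zK) * (1 + wK) = 1 + wK + zK + zK * wK := by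
  simp only [add_mul, mul_add, one_mul, mul_one]
  abel

lemma PsiA_omA : PsiA omA = omK := by
  rw [omA, map_add, PsiA_of, PsiA_of, show gc⁻¹ = gb * ga from gc_inv,
    show nu0 gc = nu0 ga * nu0 gb from by rw [← map_mul]; rfl, map_mul,
    nu0_ga, nu0_gb, expK1, expK2, omK]
  apply eq_of_add_eq_zero'
  abel_nf
  simp [two_smul, addSelf, two_zsmul, two_nsmul,
    (by simpa [one_add_one_eq_two] using addSelf (1 : R0dual) : (2 : R0dual) = 0)]

lemma mu1_nu0 : ∀ g : GD, mu1 (nu0 g) = 0 := by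
  apply GD_induction'
  · rw [map_one, mu1_one]
  · rw [nu0_ga, map_add, mu1_one, mu1_wK, add_zero]
  · rw [nu0_gb, map_add, mu1_one, mu1_zK, add_zero]
  · intro g h hg hh
    rw [map_mul, mu1_mul, hg, hh, zero_mul, mul_zero, add_zero]

lemma mu1_PsiA : ∀ v : AG, mu1 (PsiA v) = 0 := by
  apply AG_induction
  · rw [map_zero, map_zero]
  · intro r g
    rw [map_smul, map_smul, PsiA_of, mu1_nu0, smul_zero]
  · intro x y hx hy
    rw [map_add, map_add, hx, hy, add_zero]

open TrivSqZeroExt in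
lemma cycle_bound (x : R0dual) (h1 : mu1 x = 0) (h2 : qE x = 0) : ∃ y, mu1 y = x := by
  have hsnd0 : (Phi x).snd * omA = 0 := by
    have hP := Phi_mu x
    rw [h1, map_zero] at hP
    exact inl_injective (R := AG) (by rw [← hP, inl_zero])
  have hS : (Phi x).snd = 0 := omA_regular _ hsnd0
  have hx : x = PsiA (Phi x).fst := by
    have hpsi := psi_Phi x
    simp only [psi] at hpsi
    rw [hS, map_zero, zero_mul, add_zero] at hpsi
    exact hpsi.symm
  obtain ⟨p, c, hdec⟩ := mem_V_elim (V_top (Phi x).fst)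
  have hq : kap ((Phi x).fst) = 0 := by
    rw [kap, AlgHom.comp_apply, ← hx]
    exact h2
  rw [hdec, map_add, map_mul, kap_omA, mul_zero, zero_add, map_sum] at hq
  simp only [map_smul] at hq
  rw [Fin.sum_univ_four] at hq
  rw [show eA 0 = 1 from rfl, show eA 1 = ofG gc from rfl, show eA 2 = ofG ga from rfl,
    show eA 3 = ofG (gc * ga) from rfl, map_one, kap_gc, kap_ga, kap_e3] at hq
  have hcomb : ∑ i, (![c 0 + c 1 + c 2 + c 3, c 1 + c 2, c 1 + c 3, c 1]) i
      • (![(1 : extAlg), wE, zE, wE * zE]) i = 0 := by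
    rw [Fin.sum_univ_four]
    rw [show (![c 0 + c 1 + c 2 + c 3, c 1 + c 2, c 1 + c 3, c 1]) 0
        = c 0 + c 1 + c 2 + c 3 from rfl,
      show (![c 0 + c 1 + c 2 + c 3, c 1 + c 2, c 1 + c 3, c 1]) 1 = c 1 + c 2 from rfl,
      show (![c 0 + c 1 + c 2 + c 3, c 1 + c 2, c 1 + c 3, c 1]) 2 = c 1 + c 3 from rfl,
      show (![c 0 + c 1 + c 2 + c 3, c 1 + c 2, c 1 + c 3, c 1]) 3 = c 1 from rfl,
      show (![(1 : extAlg), wE, zE, wE * zE]) 0 = 1 from rfl,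
      show (![(1 : extAlg), wE, zE, wE * zE]) 1 = wE from rfl,
      show (![(1 : extAlg), wE, zE, wE * zE]) 2 = zE from rfl,
      show (![(1 : extAlg), wE, zE, wE * zE]) 3 = wE * zE from rfl]
    rw [← hq]
    simp only [smul_add, add_smul, smul_smul]
    abel
  have hz := Fintype.linearIndependent_iff.mp linIndE _ hcomb
  have hc1 : c 1 = 0 := hz 3
  have hc2 : c 2 = 0 := by
    have := hz 1
    rw [show (![c 0 + c 1 + c 2 + c 3, c 1 + c 2, c 1 + c 3, c 1]) 1 = c 1 + c 2 from rfl,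
      hc1, zero_add] at this
    exact this
  have hc3 : c 3 = 0 := by
    have := hz 2
    rw [show (![c 0 + c 1 + c 2 + c 3, c 1 + c 2, c 1 + c 3, c 1]) 2 = c 1 + c 3 from rfl,
      hc1, zero_add] at this
    exact this
  have hc0 : c 0 = 0 := by
    have := hz 0
    rw [show (![c 0 + c 1 + c 2 + c 3, c 1 + c 2, c 1 + c 3, c 1]) 0
        = c 0 + c 1 + c 2 + c 3 from rfl, hc1, hc2, hc3, add_zero, add_zero, add_zero] at this
    exact this
  have hfst : (Phi x).fst = p * omA := by
    rw [hdec, Fin.sum_univ_four, hc0, hc1, hc2, hc3]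
    simp
  refine ⟨PsiA p * thK, ?_⟩
  rw [mu1_mul, mu1_PsiA, zero_mul, zero_add, mu1_thK, hx, hfst, map_mul, PsiA_omA]
-- PART 13: surjectivity on cycles
lemma mu1_wz : mu1 (wK * zK) = 0 := by
  rw [mu1_mul, mu1_wK, mu1_zK, zero_mul, mul_zero, add_zero]

lemma cycle_surj (y : extAlg) : ∃ x, mu1 x = 0 ∧ qE x = y := by
  set r := fun i => basisE.repr y i with hr
  refine ⟨r 0 • 1 + r 1 • wK + r 2 • zK + r 3 • (wK * zK), ?_, ?_⟩
  · rw [map_add, map_add, map_add, map_smul, map_smul, map_smul, map_smul,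
      mu1_one, mu1_wK, mu1_zK, mu1_wz]
    simp
  · rw [map_add, map_add, map_add, map_smul, map_smul, map_smul, map_smul,
      map_one, qE_wK, qE_zK, map_mul, qE_wK, qE_zK]
    have hy := basisE.sum_repr y
    rw [Fin.sum_univ_four] at hy
    rw [basisE_apply, basisE_apply, basisE_apply, basisE_apply] at hy
    rw [show (![(1 : extAlg), wE, zE, wE * zE]) 0 = 1 from rfl,
      show (![(1 : extAlg), wE, zE, wE * zE]) 1 = wE from rfl,
      show (![(1 : extAlg), wE, zE, wE * zE]) 2 = zE from rfl,
      show (![(1 : extAlg), wE, zE, wE * zE]) 3 = wE * zE from rfl] at hy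
    exact hy

/-- There is a well-defined square-zero derivation `μ₁` on `R₀^!` with
`μ₁(w) = μ₁(z) = 0` and `μ₁(θ) = wz + zw`, and the homology of `(R₀^!, μ₁)` is
isomorphic as an algebra to the exterior algebra `E = F₂⟨w,z⟩/(w², z², wz+zw)`
(realized by a ring homomorphism `q : R₀^! → E` killing `θ` which is surjective on
cycles with kernel on cycles exactly the boundaries); `E` has dimension `4` over
`F₂` with basis `{1, w, z, wz}`. -/
theorem stmt_12 :
    ∃ μ₁ : R0dual →ₗ[ZMod 2] R0dual,
      μ₁ wK = 0 ∧ μ₁ zK = 0 ∧ μ₁ thK = wK * zK + zK * wK ∧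
      (∀ a b, μ₁ (a * b) = μ₁ a * b + a * μ₁ b) ∧
      (∀ a, μ₁ (μ₁ a) = 0) ∧
      ∃ q : R0dual →+* extAlg,
        q wK = wE ∧ q zK = zE ∧ q thK = 0 ∧
        (∀ x, q (μ₁ x) = 0) ∧
        (∀ y : extAlg, ∃ x, μ₁ x = 0 ∧ q x = y) ∧
        (∀ x, μ₁ x = 0 → q x = 0 → ∃ y, μ₁ y = x) ∧
        Module.finrank (ZMod 2) extAlg = 4 ∧
        LinearIndependent (ZMod 2) ![(1 : extAlg), wE, zE, wE * zE] ∧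
        Submodule.span (ZMod 2) {(1 : extAlg), wE, zE, wE * zE} = ⊤ := by
  refine ⟨mu1, mu1_wK, mu1_zK, mu1_thK, mu1_mul, mu1_sq, qE.toRingHom,
    qE_wK, qE_zK, qE_thK, qE_mu1, cycle_surj, cycle_bound, finrankE, linIndE, spanE⟩
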